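/- Trigonometric non-Lie solution of the cubic heat equation with linear sink (case δ=−1, ε=−1 of the appendix). Let C2 be a real constant. Then the function v(t,x) = sin( x/√2 ) / ( C2·e^{3t/2} + cos( x/√2 ) ) satisfies v_t(t,x) = v_{xx}(t,x) − v(t,x)³ − v(t,x) at every point (t,x) of any open subset of ℝ×ℝ on which C2·e^{3t/2} + cos( x/√2 ) ≠ 0. -/

import Mathlib

open Real Set

/-- Trigonometric non-Lie solution of the cubic heat equation with linear sink
`v_t = v_{xx} − v³ − v` (case δ = −1, ε = −1 of the appendix). -/
theorem cubic_heat_trig_solution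
    (C2 : ℝ)
    (v : ℝ → ℝ → ℝ)
    (hv : ∀ t x : ℝ,
      v t x = Real.sin (x / Real.sqrt 2)
        / (C2 * Real.exp (3 * t / 2) + Real.cos (x / Real.sqrt 2))) :
    ∀ t x : ℝ, C2 * Real.exp (3 * t / 2) + Real.cos (x / Real.sqrt 2) ≠ 0 →
      deriv (fun s => v s x) t
        = deriv (fun y => deriv (fun z => v t z) y) x - v t x ^ 3 - v t x := by
  intro t x h
  have hc2 : Real.sqrt 2 * Real.sqrt 2 = 2 := Real.mul_self_sqrt (by norm_num)
  set A : ℝ := C2 * Real.exp (3 * t / 2) with hA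
  have hid : ∀ y : ℝ, HasDerivAt (fun z : ℝ => z / Real.sqrt 2) (1 / Real.sqrt 2) y :=
    fun y => (hasDerivAt_id y).div_const _
  have hsin : ∀ y : ℝ, HasDerivAt (fun z => Real.sin (z / Real.sqrt 2))
      (Real.cos (y / Real.sqrt 2) * (1 / Real.sqrt 2)) y :=
    fun y => (Real.hasDerivAt_sin _).comp y (hid y)
  have hcos : ∀ y : ℝ, HasDerivAt (fun z => Real.cos (z / Real.sqrt 2))
      (-Real.sin (y / Real.sqrt 2) * (1 / Real.sqrt 2)) y :=
    fun y => (Real.hasDerivAt_cos _).comp y (hid y)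
  -- time derivative
  have hvt : (fun s => v s x)
      = fun s => Real.sin (x / Real.sqrt 2)
        / (C2 * Real.exp (3 * s / 2) + Real.cos (x / Real.sqrt 2)) :=
    funext fun s => hv s x
  have hexp : HasDerivAt (fun s : ℝ => C2 * Real.exp (3 * s / 2) + Real.cos (x / Real.sqrt 2))
      (C2 * (Real.exp (3 * t / 2) * (3 * 1 / 2))) t :=
    ((((hasDerivAt_id t).const_mul 3).div_const 2).exp.const_mul C2).add_const _
  have hdt : HasDerivAt (fun s => v s x)
      ((0 * (A + Real.cos (x / Real.sqrt 2))
        - Real.sin (x / Real.sqrt 2) * (C2 * (Real.exp (3 * t / 2) * (3 * 1 / 2))))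
        / (A + Real.cos (x / Real.sqrt 2)) ^ 2) t := by
    rw [hvt]
    exact (hasDerivAt_const t _).div hexp h
  -- spatial first derivative, as a function
  set F : ℝ → ℝ := fun y =>
    (Real.cos (y / Real.sqrt 2) * (1 / Real.sqrt 2) * (A + Real.cos (y / Real.sqrt 2))
      - Real.sin (y / Real.sqrt 2) * (-Real.sin (y / Real.sqrt 2) * (1 / Real.sqrt 2)))
      / (A + Real.cos (y / Real.sqrt 2)) ^ 2 with hF
  have hvx : (fun z => v t z)
      = fun z => Real.sin (z / Real.sqrt 2) / (A + Real.cos (z / Real.sqrt 2)) :=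
    funext fun z => hv t z
  have hFy : ∀ y : ℝ, A + Real.cos (y / Real.sqrt 2) ≠ 0 →
      HasDerivAt (fun z => v t z) (F y) y := by
    intro y hy
    rw [hvx]
    exact (hsin y).div ((hcos y).const_add A) hy
  have hcont : ContinuousAt (fun y : ℝ => A + Real.cos (y / Real.sqrt 2)) x := by fun_prop
  have hne : ∀ᶠ y in nhds x, A + Real.cos (y / Real.sqrt 2) ≠ 0 := hcont.eventually_ne h
  have hev : (fun y => deriv (fun z => v t z) y) =ᶠ[nhds x] F :=
    hne.mono fun y hy => (hFy y hy).deriv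
  have hd2 : deriv (fun y => deriv (fun z => v t z) y) x = deriv F x := hev.deriv_eq
  -- simplify F
  set G : ℝ → ℝ := fun y =>
    (1 / Real.sqrt 2) * (A * Real.cos (y / Real.sqrt 2) + 1)
      / (A + Real.cos (y / Real.sqrt 2)) ^ 2 with hG
  have hFG : F = G := by
    funext y
    have hpy := Real.sin_sq_add_cos_sq (y / Real.sqrt 2)
    have hnum : Real.cos (y / Real.sqrt 2) * (1 / Real.sqrt 2) * (A + Real.cos (y / Real.sqrt 2))
        - Real.sin (y / Real.sqrt 2) * (-Real.sin (y / Real.sqrt 2) * (1 / Real.sqrt 2))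
        = (1 / Real.sqrt 2) * (A * Real.cos (y / Real.sqrt 2) + 1) := by
        linear_combination (1 / Real.sqrt 2) * hpy
    simp only [hF, hG, hnum]
  -- second spatial derivative via G
  have hnumd : HasDerivAt (fun y => (1 / Real.sqrt 2) * (A * Real.cos (y / Real.sqrt 2) + 1))
      ((1 / Real.sqrt 2) * (A * (-Real.sin (x / Real.sqrt 2) * (1 / Real.sqrt 2)))) x :=
    (((hcos x).const_mul A).add_const 1).const_mul _
  have hdend : HasDerivAt (fun y => (A + Real.cos (y / Real.sqrt 2)) ^ 2)
      (2 * (A + Real.cos (x / Real.sqrt 2)) ^ 1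
        * (-Real.sin (x / Real.sqrt 2) * (1 / Real.sqrt 2))) x :=
    ((hcos x).const_add A).pow 2
  have hGd : HasDerivAt G _ x := hnumd.div hdend (pow_ne_zero 2 h)
  rw [hdt.deriv, hd2, hFG, hGd.deriv, hv t x, ← hA]
  have hs2 : Real.sqrt 2 ≠ 0 := by positivity
  have hpx := Real.sin_sq_add_cos_sq (x / Real.sqrt 2)
  set s := Real.sin (x / Real.sqrt 2)
  set co := Real.cos (x / Real.sqrt 2)
  have h32 : C2 * (Real.exp (3 * t / 2) * (3 * 1 / 2)) = 3 / 2 * A := by rw [hA]; ring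
  rw [h32]
  field_simp
  linear_combination (4 * s) * hpx + (C2 * Real.exp (3 * t / 2) * co * s - (C2 * Real.exp (3 * t / 2)) ^ 2 * s + 2 * co ^ 2 * s + 2 * s ^ 3) * Real.sq_sqrt (by norm_num : (0:ℝ) ≤ 2)
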